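/- Let (g,σ,B) be an indecomposable symmetric triple with eigenspace decomposition g = h ⊕ m and dim m > 1. Then the center z(g) of g is totally isotropic with respect to B, i.e. B vanishes on z(g) × z(g). -/

import Mathlib

/-- For an indecomposable symmetric triple `(g, σ, B)` with `dim m > 1`,
the center `z(g)` is totally isotropic with respect to `B`. -/
theorem center_totallyIsotropic_of_indecomposable
    (L : Type*) [LieRing L] [LieAlgebra ℝ L] [FiniteDimensional ℝ L]
    (σ : L →ₗ⁅ℝ⁆ L) (hσ : ∀ x, σ (σ x) = x)
    (H M : Submodule ℝ L)
    (hH : ∀ x, x ∈ H ↔ σ x = x)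
    (hM : ∀ x, x ∈ M ↔ σ x = -x)
    (hcompl : IsCompl H M)
    (hHspan : H = Submodule.span ℝ {z : L | ∃ x ∈ M, ∃ y ∈ M, ⁅x, y⁆ = z})
    (B : LinearMap.BilinForm ℝ L)
    (hBnd : B.Nondegenerate)
    (hBsymm : ∀ x y : L, B x y = B y x)
    (hBσ : ∀ x y : L, B (σ x) (σ y) = B x y)
    (hBad : ∀ x y z : L, B ⁅x, y⁆ z = B x ⁅y, z⁆)
    -- indecomposability: no proper nonzero ad(h)-invariant subspace of m on which B is
    -- nondegenerate
    (hindec : ∀ m' : Submodule ℝ L, m' ≤ M →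
      (∀ h ∈ H, ∀ x ∈ m', ⁅h, x⁆ ∈ m') →
      (∀ x ∈ m', (∀ y ∈ m', B x y = 0) → x = 0) →
      m' = ⊥ ∨ m' = M)
    (hdim : 1 < Module.finrank ℝ M) :
    ∀ x ∈ LieAlgebra.center ℝ L, ∀ y ∈ LieAlgebra.center ℝ L, B x y = 0 := by
  -- centrality in concrete form
  have hcent : ∀ z ∈ LieAlgebra.center ℝ L, ∀ a : L, ⁅z, a⁆ = 0 := by
    intro z hz a
    have h1 : ⁅a, z⁆ = 0 := hz a
    rw [← lie_skew, h1, neg_zero]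
  -- σ preserves the center
  have hσcent : ∀ z ∈ LieAlgebra.center ℝ L, σ z ∈ LieAlgebra.center ℝ L := by
    intro z hz a
    have : σ ⁅σ a, z⁆ = ⁅a, σ z⁆ := by rw [LieHom.map_lie, hσ]
    rw [← this, hz (σ a), map_zero σ]
  -- B vanishes when second argument is in H, for central first argument
  have BH : ∀ z ∈ LieAlgebra.center ℝ L, ∀ w ∈ H, B z w = 0 := by
    intro z hz w hw
    rw [hHspan] at hw
    induction hw using Submodule.span_induction with
    | mem w hw =>
      obtain ⟨a, _, b, _, rfl⟩ := hw
      rw [hBsymm, hBad]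
      have : ⁅b, z⁆ = 0 := by rw [← lie_skew, hcent z hz b, neg_zero]
      rw [this, map_zero]
    | zero => simp
    | add a b _ _ ha hb => rw [map_add, ha, hb, add_zero]
    | smul c a _ ha => rw [map_smul, ha, smul_zero]
  -- H and M are B-orthogonal
  have BHM : ∀ w ∈ H, ∀ v ∈ M, B w v = 0 := by
    intro w hw v hv
    have : B w v = - B w v := by
      conv_lhs => rw [← hBσ w v, (hH w).mp hw, (hM v).mp hv, LinearMap.map_neg]
    linarith
  -- central elements of M are isotropic
  have B0 : ∀ z ∈ LieAlgebra.center ℝ L, z ∈ M → B z z = 0 := by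
    intro z hz hzM
    by_contra hne
    have hz0 : z ≠ 0 := by rintro rfl; simp at hne
    have := hindec (Submodule.span ℝ {z})
      (by rw [Submodule.span_le, Set.singleton_subset_iff]; exact hzM)
      (by
        intro h _ x hx
        obtain ⟨c, rfl⟩ := Submodule.mem_span_singleton.mp hx
        have : ⁅h, z⁆ = 0 := by rw [← lie_skew, hcent z hz h, neg_zero]
        rw [lie_smul, this, smul_zero]
        exact Submodule.zero_mem _)
      (by
        intro x hx hxB
        obtain ⟨c, rfl⟩ := Submodule.mem_span_singleton.mp hx
        have := hxB z (Submodule.mem_span_singleton_self z)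
        rw [map_smul] at this
        have hc : c = 0 := by
          by_contra hc
          exact hne (by
            have := this
            simp only [LinearMap.smul_apply, smul_eq_mul] at this
            exact (mul_eq_zero.mp this).resolve_left hc)
        rw [hc, zero_smul])
    rcases this with h | h
    · exact hz0 (Submodule.span_singleton_eq_bot.mp h)
    · have : Module.finrank ℝ M = 1 := by
        rw [← h, finrank_span_singleton hz0]
      omega
  -- decompose x and y into H- and M-parts
  intro x hx y hy
  have half : ∀ z : L, z = (2⁻¹ : ℝ) • (z + σ z) + (2⁻¹ : ℝ) • (z - σ z) := by
    intro z
    rw [← smul_add]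
    have : z + σ z + (z - σ z) = (2 : ℝ) • z := by
      rw [two_smul]; abel
    rw [this, smul_smul]; norm_num
  set xh := (2⁻¹ : ℝ) • (x + σ x) with hxh
  set xm := (2⁻¹ : ℝ) • (x - σ x) with hxm
  set yh := (2⁻¹ : ℝ) • (y + σ y) with hyh
  set ym := (2⁻¹ : ℝ) • (y - σ y) with hym
  have memH : ∀ z : L, ((2⁻¹ : ℝ) • (z + σ z)) ∈ H := by
    intro z
    rw [hH, map_smul σ, map_add σ, hσ, add_comm]
  have memM : ∀ z : L, ((2⁻¹ : ℝ) • (z - σ z)) ∈ M := by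
    intro z
    rw [hM, map_smul σ, map_sub σ, hσ, ← smul_neg, neg_sub]
  have centH : ∀ z ∈ LieAlgebra.center ℝ L,
      ((2⁻¹ : ℝ) • (z + σ z)) ∈ LieAlgebra.center ℝ L :=
    fun z hz => Submodule.smul_mem _ _
      (Submodule.add_mem _ hz (hσcent z hz))
  have centM : ∀ z ∈ LieAlgebra.center ℝ L,
      ((2⁻¹ : ℝ) • (z - σ z)) ∈ LieAlgebra.center ℝ L :=
    fun z hz => Submodule.smul_mem _ _
      (Submodule.sub_mem _ hz (hσcent z hz))
  -- the M-parts pair to zero by polarization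
  have hxmym : B xm ym = 0 := by
    have hsum : B (xm + ym) (xm + ym) = 0 :=
      B0 _ (Submodule.add_mem _ (centM x hx) (centM y hy))
        (Submodule.add_mem _ (memM x) (memM y))
    have h1 : B xm xm = 0 := B0 _ (centM x hx) (memM x)
    have h2 : B ym ym = 0 := B0 _ (centM y hy) (memM y)
    have hsy : B ym xm = B xm ym := hBsymm ym xm
    simp only [map_add, LinearMap.add_apply] at hsum
    rw [h1, h2, hsy] at hsum
    linarith
  calc B x y = B (xh + xm) (yh + ym) := by rw [← half x, ← half y]
    _ = B xh yh + B xm yh + (B xh ym + B xm ym) := by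
        simp [map_add]
    _ = 0 := by
        rw [BH xh (centH x hx) yh (memH y), BHM xh (memH x) ym (memM y),
          BH xm (centM x hx) yh (memH y), hxmym]
        ring
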